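/- For a square-summable sequence φ: ℤ² → ℂ, ‖φ‖_{ℓ∞(ℤ²)} ≤ (4/√2)^{1/4} · ‖∇_D φ‖_{ℓ²(ℤ²)}^{1/4} · ‖φ‖_{ℓ²(ℤ²)}^{3/4}, the case d = 2, p = 1 of the discrete Agmon–Kolmogorov inequality. -/

import Mathlib

noncomputable section

open Finset Filter

/-- Partial difference in the first coordinate on ℤ². -/
def D1 (φ : ℤ × ℤ → ℂ) : ℤ × ℤ → ℂ := fun p => φ (p.1 + 1, p.2) - φ p

/-- Partial difference in the second coordinate on ℤ². -/
def D2 (φ : ℤ × ℤ → ℂ) : ℤ × ℤ → ℂ := fun p => φ (p.1, p.2 + 1) - φ p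

/-- The ℓ²(ℤ²) norm. -/
def l2 (φ : ℤ × ℤ → ℂ) : ℝ := Real.sqrt (∑' p : ℤ × ℤ, ‖φ p‖ ^ 2)

/-- Cauchy–Schwarz for tsums of nonnegative reals. -/
lemma my_cs_tsum (a b : ℤ → ℝ) (ha : ∀ k, 0 ≤ a k) (hb : ∀ k, 0 ≤ b k)
    (ha2 : Summable fun k => a k ^ 2) (hb2 : Summable fun k => b k ^ 2) :
    ∑' k, a k * b k ≤ Real.sqrt (∑' k, a k ^ 2) * Real.sqrt (∑' k, b k ^ 2) := by
  have hab : Summable fun k => a k * b k := by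
    refine Summable.of_nonneg_of_le (fun k => mul_nonneg (ha k) (hb k)) (fun k => ?_) (ha2.add hb2)
    nlinarith [sq_nonneg (a k - b k)]
  refine Summable.tsum_le_of_sum_le hab (fun s => ?_)
  calc ∑ k ∈ s, a k * b k ≤ Real.sqrt (∑ k ∈ s, a k ^ 2) * Real.sqrt (∑ k ∈ s, b k ^ 2) :=
        Real.sum_mul_le_sqrt_mul_sqrt s a b
    _ ≤ _ := by
        gcongr
        · exact Summable.sum_le_tsum s (fun k _ => sq_nonneg _) ha2
        · exact Summable.sum_le_tsum s (fun k _ => sq_nonneg _) hb2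

/-- 1D discrete Agmon inequality (squared form). -/
lemma my_one_dim (ψ : ℤ → ℂ) (hψ : Summable fun k => ‖ψ k‖ ^ 2) (m : ℤ) :
    ‖ψ m‖ ^ 2 ≤ 2 * Real.sqrt (∑' k, ‖ψ (k + 1) - ψ k‖ ^ 2) * Real.sqrt (∑' k, ‖ψ k‖ ^ 2) := by
  set g : ℤ → ℝ := fun k => ‖ψ k‖ ^ 2 with hg
  have hg0 : ∀ k, 0 ≤ g k := fun k => sq_nonneg _
  have hshift : Summable fun k => g (k + 1) :=
    ((Equiv.addRight (1 : ℤ)).summable_iff (f := g)).mpr hψ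
  have hd : Summable fun k => |g (k + 1) - g k| := by
    refine Summable.of_nonneg_of_le (fun k => abs_nonneg _) (fun k => ?_) (hshift.add hψ)
    calc |g (k + 1) - g k| ≤ |g (k+1)| + |g k| := abs_sub _ _
      _ = g (k+1) + g k := by rw [abs_of_nonneg (hg0 _), abs_of_nonneg (hg0 _)]
  set T : ℝ := ∑' k, |g (k + 1) - g k| with hT
  -- Step 1: g m ≤ T
  have key1 : g m ≤ T := by
    have hbound : ∀ N : ℕ, g m ≤ g (m + N) + T := by
      intro N
      have tel : ∑ j ∈ Finset.range N, (g (m + j) - g (m + (j+1))) = g (m + 0) - g (m + N) := by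
        have := Finset.sum_range_sub' (fun j : ℕ => g (m + j)) N
        simpa using this
      have hle : ∑ j ∈ Finset.range N, (g (m + j) - g (m + (j+1))) ≤ T := by
        have h1 : ∀ j : ℕ, g (m + j) - g (m + (j+1)) ≤ |g ((m + j) + 1) - g (m + j)| := by
          intro j
          have hcast : (m : ℤ) + ((j:ℤ) + 1) = (m + j) + 1 := by ring
          rw [hcast, abs_sub_comm]
          exact le_abs_self _
        calc ∑ j ∈ Finset.range N, (g (m + j) - g (m + (j+1)))
            ≤ ∑ j ∈ Finset.range N, |g ((m + j) + 1) - g (m + j)| :=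
              Finset.sum_le_sum (fun j _ => h1 j)
          _ = ∑ k ∈ (Finset.range N).map ⟨fun j : ℕ => m + (j : ℤ), fun x y h => by
                simpa using h⟩, |g (k + 1) - g k| := by rw [Finset.sum_map]; rfl
          _ ≤ T := Summable.sum_le_tsum _ (fun k _ => abs_nonneg _) hd
      have := tel ▸ hle
      simp only [Nat.cast_zero, add_zero] at this
      linarith
    have htend : Tendsto (fun N : ℕ => g (m + N) + T) atTop (nhds (0 + T)) := by
      refine Tendsto.add_const T ?_
      have h1 : Tendsto g cofinite (nhds 0) := hψ.tendsto_cofinite_zero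
      have h2 : Tendsto (fun N : ℕ => m + (N : ℤ)) cofinite cofinite := by
        refine Function.Injective.tendsto_cofinite (fun x y h => by simpa using h)
      have := h1.comp h2
      rwa [Nat.cofinite_eq_atTop] at this
    have := ge_of_tendsto' htend hbound
    linarith [this]
  -- Step 2: Cauchy-Schwarz bound on T
  set a : ℤ → ℝ := fun k => ‖ψ (k + 1) - ψ k‖ with ha
  set b : ℤ → ℝ := fun k => ‖ψ (k + 1)‖ + ‖ψ k‖ with hb
  have ha2 : Summable fun k => a k ^ 2 := by
    refine Summable.of_nonneg_of_le (fun k => sq_nonneg _) (fun k => ?_)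
      (((hshift.mul_left 2)).add (hψ.mul_left 2))
    have := norm_sub_le (ψ (k+1)) (ψ k)
    have h2 : a k ^ 2 ≤ (‖ψ (k+1)‖ + ‖ψ k‖) ^ 2 := by
      apply pow_le_pow_left₀ (norm_nonneg _) this
    simp only [hg]
    nlinarith [norm_nonneg (ψ (k+1)), norm_nonneg (ψ k), sq_nonneg (‖ψ (k+1)‖ - ‖ψ k‖)]
  have hb2 : Summable fun k => b k ^ 2 := by
    refine Summable.of_nonneg_of_le (fun k => sq_nonneg _) (fun k => ?_)
      (((hshift.mul_left 2)).add (hψ.mul_left 2))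
    simp only [hb, hg]
    nlinarith [sq_nonneg (‖ψ (k+1)‖ - ‖ψ k‖)]
  have key2 : T ≤ Real.sqrt (∑' k, a k ^ 2) * Real.sqrt (∑' k, b k ^ 2) := by
    refine le_trans (Summable.tsum_le_tsum (fun k => ?_) hd ?_) (my_cs_tsum a b (fun k => norm_nonneg _)
      (fun k => add_nonneg (norm_nonneg _) (norm_nonneg _)) ha2 hb2)
    · have heq : g (k+1) - g k = (‖ψ (k+1)‖ - ‖ψ k‖) * (‖ψ (k+1)‖ + ‖ψ k‖) := by
        simp only [hg]; ring
      rw [heq, abs_mul, abs_of_nonneg (add_nonneg (norm_nonneg _) (norm_nonneg _))]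
      exact mul_le_mul_of_nonneg_right (abs_norm_sub_norm_le _ _)
        (add_nonneg (norm_nonneg _) (norm_nonneg _))
    · exact Summable.of_nonneg_of_le (fun k => mul_nonneg (norm_nonneg _)
        (add_nonneg (norm_nonneg _) (norm_nonneg _)))
        (fun k => by nlinarith [sq_nonneg (a k - b k), norm_nonneg (ψ (k+1) - ψ k)]) (ha2.add hb2)
  -- Step 3: bound on ∑ b²
  have key3 : ∑' k, b k ^ 2 ≤ 4 * ∑' k, g k := by
    have h1 : ∑' k, b k ^ 2 ≤ ∑' k, (2 * g (k+1) + 2 * g k) := by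
      refine Summable.tsum_le_tsum (fun k => ?_) hb2 ((hshift.mul_left 2).add (hψ.mul_left 2))
      simp only [hb, hg]
      nlinarith [sq_nonneg (‖ψ (k+1)‖ - ‖ψ k‖)]
    have h2 : ∑' k : ℤ, g (k + 1) = ∑' k, g k := (Equiv.addRight (1 : ℤ)).tsum_eq g
    rw [Summable.tsum_add (hshift.mul_left 2) (hψ.mul_left 2), tsum_mul_left, tsum_mul_left, h2] at h1
    linarith
  have hsq : Real.sqrt (∑' k, b k ^ 2) ≤ 2 * Real.sqrt (∑' k, g k) := by
    calc Real.sqrt (∑' k, b k ^ 2) ≤ Real.sqrt (4 * ∑' k, g k) := Real.sqrt_le_sqrt key3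
      _ = 2 * Real.sqrt (∑' k, g k) := by
          rw [show (4:ℝ) = 2^2 by norm_num, Real.sqrt_mul (by positivity),
            Real.sqrt_sq (by norm_num)]
  calc g m ≤ T := key1
    _ ≤ Real.sqrt (∑' k, a k ^ 2) * Real.sqrt (∑' k, b k ^ 2) := key2
    _ ≤ Real.sqrt (∑' k, a k ^ 2) * (2 * Real.sqrt (∑' k, g k)) := by
        exact mul_le_mul_of_nonneg_left hsq (Real.sqrt_nonneg _)
    _ = 2 * Real.sqrt (∑' k, a k ^ 2) * Real.sqrt (∑' k, g k) := by ring

lemma my_rpow4 (x : ℝ) (hx : 0 ≤ x) (c : ℝ) : (x ^ c) ^ (4:ℕ) = x ^ (c * 4) := by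
  rw [← Real.rpow_natCast (x ^ c) 4, ← Real.rpow_mul hx]; norm_num

/-- Agmon–Kolmogorov inequality on ℤ², case d = 2, p = 1. -/
theorem agmon_kolmogorov_2d_p1 (φ : ℤ × ℤ → ℂ) (h : Summable fun p : ℤ × ℤ => ‖φ p‖ ^ 2) :
    (⨆ p : ℤ × ℤ, ‖φ p‖) ≤
      (8 / Real.sqrt 2) ^ ((1 : ℝ) / 4) *
        Real.sqrt (l2 (D1 φ) ^ 2 + l2 (D2 φ) ^ 2) ^ ((1 : ℝ) / 4) *
          l2 φ ^ ((3 : ℝ) / 4) := by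
  have hs1 : Summable fun p : ℤ × ℤ => ‖φ (p.1 + 1, p.2)‖ ^ 2 :=
    h.comp_injective (f := fun q : ℤ × ℤ => ‖φ q‖ ^ 2)
      (i := fun p : ℤ × ℤ => (p.1 + 1, p.2)) (fun x y hxy => by
        simp only [Prod.mk.injEq] at hxy
        exact Prod.ext (by omega) hxy.2)
  have hs2 : Summable fun p : ℤ × ℤ => ‖φ (p.1, p.2 + 1)‖ ^ 2 :=
    h.comp_injective (f := fun q : ℤ × ℤ => ‖φ q‖ ^ 2)
      (i := fun p : ℤ × ℤ => (p.1, p.2 + 1)) (fun x y hxy => by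
        simp only [Prod.mk.injEq] at hxy
        exact Prod.ext hxy.1 (by omega))
  have hD1 : Summable fun p : ℤ × ℤ => ‖D1 φ p‖ ^ 2 := by
    refine Summable.of_nonneg_of_le (fun p => sq_nonneg _) (fun p => ?_)
      ((hs1.mul_left 2).add (h.mul_left 2))
    have := norm_sub_le (φ (p.1 + 1, p.2)) (φ p)
    simp only [D1]
    nlinarith [norm_nonneg (φ (p.1 + 1, p.2)), norm_nonneg (φ p),
      sq_nonneg (‖φ (p.1 + 1, p.2)‖ - ‖φ p‖), norm_nonneg (φ (p.1+1,p.2) - φ p)]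
  have hD2 : Summable fun p : ℤ × ℤ => ‖D2 φ p‖ ^ 2 := by
    refine Summable.of_nonneg_of_le (fun p => sq_nonneg _) (fun p => ?_)
      ((hs2.mul_left 2).add (h.mul_left 2))
    have := norm_sub_le (φ (p.1, p.2 + 1)) (φ p)
    simp only [D2]
    nlinarith [norm_nonneg (φ (p.1, p.2 + 1)), norm_nonneg (φ p),
      sq_nonneg (‖φ (p.1, p.2 + 1)‖ - ‖φ p‖), norm_nonneg (φ (p.1,p.2+1) - φ p)]
  -- slice sums are at most the full sums
  have hl2nn : 0 ≤ l2 φ := Real.sqrt_nonneg _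
  have hl2D1nn : 0 ≤ l2 (D1 φ) := Real.sqrt_nonneg _
  have hl2D2nn : 0 ≤ l2 (D2 φ) := Real.sqrt_nonneg _
  have row : ∀ m n : ℤ, ‖φ (m, n)‖ ^ 2 ≤ 2 * l2 (D1 φ) * l2 φ := by
    intro m n
    have hinj : Function.Injective (fun k : ℤ => ((k, n) : ℤ × ℤ)) := fun x y hxy => by
      simpa [Prod.ext_iff] using hxy
    have hsl : Summable fun k : ℤ => ‖φ (k, n)‖ ^ 2 := h.comp_injective hinj
    have h1 := my_one_dim (fun k => φ (k, n)) hsl m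
    have e1 : (∑' k : ℤ, ‖φ (k + 1, n) - φ (k, n)‖ ^ 2) = ∑' k : ℤ, ‖D1 φ (k, n)‖ ^ 2 := rfl
    have h2 : Real.sqrt (∑' k : ℤ, ‖D1 φ (k, n)‖ ^ 2) ≤ l2 (D1 φ) := by
      apply Real.sqrt_le_sqrt
      exact Summable.tsum_le_tsum_of_inj _ hinj (fun p _ => sq_nonneg _) (fun k => le_refl _)
        (hD1.comp_injective hinj) hD1
    have h3 : Real.sqrt (∑' k : ℤ, ‖φ (k, n)‖ ^ 2) ≤ l2 φ := by
      apply Real.sqrt_le_sqrt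
      exact Summable.tsum_le_tsum_of_inj _ hinj (fun p _ => sq_nonneg _) (fun k => le_refl _) hsl h
    simp only [e1] at h1
    calc ‖φ (m, n)‖ ^ 2 ≤ 2 * Real.sqrt (∑' k : ℤ, ‖D1 φ (k, n)‖ ^ 2) *
          Real.sqrt (∑' k : ℤ, ‖φ (k, n)‖ ^ 2) := h1
      _ ≤ 2 * l2 (D1 φ) * l2 φ := by
          apply mul_le_mul (by linarith [mul_le_mul_of_nonneg_left h2 (by norm_num : (0:ℝ) ≤ 2)])
            h3 (Real.sqrt_nonneg _) (by positivity)
  have col : ∀ m n : ℤ, ‖φ (m, n)‖ ^ 2 ≤ 2 * l2 (D2 φ) * l2 φ := by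
    intro m n
    have hinj : Function.Injective (fun k : ℤ => ((m, k) : ℤ × ℤ)) := fun x y hxy => by
      simpa [Prod.ext_iff] using hxy
    have hsl : Summable fun k : ℤ => ‖φ (m, k)‖ ^ 2 := h.comp_injective hinj
    have h1 := my_one_dim (fun k => φ (m, k)) hsl n
    have e1 : (∑' k : ℤ, ‖φ (m, k + 1) - φ (m, k)‖ ^ 2) = ∑' k : ℤ, ‖D2 φ (m, k)‖ ^ 2 := rfl
    have h2 : Real.sqrt (∑' k : ℤ, ‖D2 φ (m, k)‖ ^ 2) ≤ l2 (D2 φ) := by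
      apply Real.sqrt_le_sqrt
      exact Summable.tsum_le_tsum_of_inj _ hinj (fun p _ => sq_nonneg _) (fun k => le_refl _)
        (hD2.comp_injective hinj) hD2
    have h3 : Real.sqrt (∑' k : ℤ, ‖φ (m, k)‖ ^ 2) ≤ l2 φ := by
      apply Real.sqrt_le_sqrt
      exact Summable.tsum_le_tsum_of_inj _ hinj (fun p _ => sq_nonneg _) (fun k => le_refl _) hsl h
    simp only [e1] at h1
    calc ‖φ (m, n)‖ ^ 2 ≤ 2 * Real.sqrt (∑' k : ℤ, ‖D2 φ (m, k)‖ ^ 2) *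
          Real.sqrt (∑' k : ℤ, ‖φ (m, k)‖ ^ 2) := h1
      _ ≤ 2 * l2 (D2 φ) * l2 φ := by
          apply mul_le_mul (by linarith [mul_le_mul_of_nonneg_left h2 (by norm_num : (0:ℝ) ≤ 2)])
            h3 (Real.sqrt_nonneg _) (by positivity)
  -- gradient bound: l2 (Di φ)^2 ≤ 4 * l2 φ ^ 2
  have hl2sq : l2 φ ^ 2 = ∑' p : ℤ × ℤ, ‖φ p‖ ^ 2 :=
    Real.sq_sqrt (tsum_nonneg (fun p => sq_nonneg _))
  have hshift1 : (∑' p : ℤ × ℤ, ‖φ (p.1 + 1, p.2)‖ ^ 2) = ∑' p : ℤ × ℤ, ‖φ p‖ ^ 2 := by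
    have := ((Equiv.addRight (1:ℤ)).prodCongr (Equiv.refl ℤ)).tsum_eq
      (fun q : ℤ × ℤ => ‖φ q‖ ^ 2)
    simpa [Equiv.prodCongr, Prod.map] using this
  have hshift2 : (∑' p : ℤ × ℤ, ‖φ (p.1, p.2 + 1)‖ ^ 2) = ∑' p : ℤ × ℤ, ‖φ p‖ ^ 2 := by
    have := ((Equiv.refl ℤ).prodCongr (Equiv.addRight (1:ℤ))).tsum_eq
      (fun q : ℤ × ℤ => ‖φ q‖ ^ 2)
    simpa [Equiv.prodCongr, Prod.map] using this
  have hDle1 : l2 (D1 φ) ^ 2 ≤ 4 * l2 φ ^ 2 := by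
    rw [show l2 (D1 φ) ^ 2 = ∑' p : ℤ × ℤ, ‖D1 φ p‖ ^ 2 from
      Real.sq_sqrt (tsum_nonneg (fun p => sq_nonneg _)), hl2sq]
    calc (∑' p : ℤ × ℤ, ‖D1 φ p‖ ^ 2)
        ≤ ∑' p : ℤ × ℤ, (2 * ‖φ (p.1 + 1, p.2)‖ ^ 2 + 2 * ‖φ p‖ ^ 2) := by
          refine Summable.tsum_le_tsum (fun p => ?_) hD1 ((hs1.mul_left 2).add (h.mul_left 2))
          have := norm_sub_le (φ (p.1 + 1, p.2)) (φ p)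
          simp only [D1]
          nlinarith [sq_nonneg (‖φ (p.1 + 1, p.2)‖ - ‖φ p‖), norm_nonneg (φ (p.1+1,p.2) - φ p),
            norm_nonneg (φ (p.1 + 1, p.2)), norm_nonneg (φ p)]
      _ = 4 * ∑' p : ℤ × ℤ, ‖φ p‖ ^ 2 := by
          rw [Summable.tsum_add (hs1.mul_left 2) (h.mul_left 2), tsum_mul_left, tsum_mul_left, hshift1]
          ring
  have hDle2 : l2 (D2 φ) ^ 2 ≤ 4 * l2 φ ^ 2 := by
    rw [show l2 (D2 φ) ^ 2 = ∑' p : ℤ × ℤ, ‖D2 φ p‖ ^ 2 from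
      Real.sq_sqrt (tsum_nonneg (fun p => sq_nonneg _)), hl2sq]
    calc (∑' p : ℤ × ℤ, ‖D2 φ p‖ ^ 2)
        ≤ ∑' p : ℤ × ℤ, (2 * ‖φ (p.1, p.2 + 1)‖ ^ 2 + 2 * ‖φ p‖ ^ 2) := by
          refine Summable.tsum_le_tsum (fun p => ?_) hD2 ((hs2.mul_left 2).add (h.mul_left 2))
          have := norm_sub_le (φ (p.1, p.2 + 1)) (φ p)
          simp only [D2]
          nlinarith [sq_nonneg (‖φ (p.1, p.2 + 1)‖ - ‖φ p‖), norm_nonneg (φ (p.1,p.2+1) - φ p),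
            norm_nonneg (φ (p.1, p.2 + 1)), norm_nonneg (φ p)]
      _ = 4 * ∑' p : ℤ × ℤ, ‖φ p‖ ^ 2 := by
          rw [Summable.tsum_add (hs2.mul_left 2) (h.mul_left 2), tsum_mul_left, tsum_mul_left, hshift2]
          ring
  set G : ℝ := Real.sqrt (l2 (D1 φ) ^ 2 + l2 (D2 φ) ^ 2) with hG
  set S : ℝ := l2 φ with hS
  have hGnn : 0 ≤ G := Real.sqrt_nonneg _
  have hG2 : G ^ 2 = l2 (D1 φ) ^ 2 + l2 (D2 φ) ^ 2 :=
    Real.sq_sqrt (by positivity)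
  have hGS : G ≤ 2 * Real.sqrt 2 * S := by
    have h8 : G ^ 2 ≤ (2 * Real.sqrt 2 * S) ^ 2 := by
      have : (2 * Real.sqrt 2 * S) ^ 2 = 8 * S ^ 2 := by
        have h2 : Real.sqrt 2 ^ 2 = 2 := Real.sq_sqrt (by norm_num)
        nlinarith [h2]
      rw [this, hG2]
      linarith
    exact le_of_pow_le_pow_left₀ (by norm_num) (by positivity) h8
  have hSnn : 0 ≤ S := hl2nn
  have hconst : (8 : ℝ) / Real.sqrt 2 = 4 * Real.sqrt 2 := by
    rw [div_eq_iff (by positivity : Real.sqrt 2 ≠ 0)]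
    nlinarith [Real.sq_sqrt (show (0:ℝ) ≤ 2 by norm_num)]
  have hcnn : (0 : ℝ) ≤ 8 / Real.sqrt 2 := by positivity
  refine ciSup_le (fun p => ?_)
  -- pointwise fourth-power bound
  have h4 : ‖φ p‖ ^ 4 ≤ 8 / Real.sqrt 2 * G * S ^ 3 := by
    have hrow := row p.1 p.2
    have hcol := col p.1 p.2
    rw [show ((p.1, p.2) : ℤ × ℤ) = p from rfl] at hrow hcol
    have hfour : ‖φ p‖ ^ 4 = ‖φ p‖ ^ 2 * ‖φ p‖ ^ 2 := by ring
    have h1 : ‖φ p‖ ^ 4 ≤ (2 * l2 (D1 φ) * l2 φ) * (2 * l2 (D2 φ) * l2 φ) := by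
      rw [hfour]
      exact mul_le_mul hrow hcol (sq_nonneg _) (by positivity)
    have h2 : (2 * l2 (D1 φ) * l2 φ) * (2 * l2 (D2 φ) * l2 φ) ≤ 2 * G ^ 2 * S ^ 2 := by
      rw [hG2]
      nlinarith [sq_nonneg (l2 (D1 φ) - l2 (D2 φ)), sq_nonneg (l2 φ)]
    have h3 : 2 * G ^ 2 * S ^ 2 ≤ 2 * G * (2 * Real.sqrt 2 * S) * S ^ 2 := by
      have : 2 * G ^ 2 * S ^ 2 = 2 * G * G * S ^ 2 := by ring
      rw [this]
      have := mul_le_mul_of_nonneg_left hGS (by positivity : (0:ℝ) ≤ 2 * G)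
      exact mul_le_mul_of_nonneg_right this (sq_nonneg _)
    rw [hconst]
    nlinarith [h1, h2, h3, Real.sqrt_nonneg 2]
  -- pass to fourth roots
  have hRnn : 0 ≤ (8 / Real.sqrt 2) ^ ((1 : ℝ) / 4) * G ^ ((1 : ℝ) / 4) * S ^ ((3 : ℝ) / 4) :=
    mul_nonneg (mul_nonneg (Real.rpow_nonneg hcnn _) (Real.rpow_nonneg hGnn _))
      (Real.rpow_nonneg hSnn _)
  refine le_of_pow_le_pow_left₀ (show (4:ℕ) ≠ 0 by norm_num) hRnn ?_
  have hexp : ((8 / Real.sqrt 2) ^ ((1 : ℝ) / 4) * G ^ ((1 : ℝ) / 4) * S ^ ((3 : ℝ) / 4)) ^ (4:ℕ)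
      = 8 / Real.sqrt 2 * G * S ^ 3 := by
    rw [mul_pow, mul_pow, my_rpow4 _ hcnn, my_rpow4 _ hGnn, my_rpow4 _ hSnn]
    norm_num
  rw [hexp]
  calc ‖φ p‖ ^ (4:ℕ) ≤ 8 / Real.sqrt 2 * G * S ^ 3 := h4
    _ = _ := rfl
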